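/- Let (Z, B_Z) and (W, B_W) be measurable spaces such that the diagonal Δ_{W×W} = {(w,w) : w ∈ W} belongs to the product σ-algebra B_W ⊗ B_W. Let F : Z → W be B_Z/B_W-measurable. Let (Ω, F, ℙ) and (Ω', F', ℙ') be probability spaces and let U : Ω → Z, U' : Ω' → Z and V : Ω' → W be measurable maps. If the pushforward of ℙ under ω ↦ (U(ω), F(U(ω))) coincides with the pushforward of ℙ' under ω' ↦ (U'(ω'), V(ω')) as measures on (Z × W, B_Z ⊗ B_W), then V = F ∘ U' holds ℙ'-almost surely. -/

import Mathlib

open MeasureTheory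

/-- Identification of a.s. representations of nonlinear compositions: if the diagonal of
`W × W` is measurable for the product σ-algebra, `F : Z → W` is measurable, and the joint
law of `(U, F(U))` under `ℙ` equals the joint law of `(U', V)` under `ℙ'`, then
`V = F ∘ U'` almost surely. -/
theorem identification_of_composition
    {Z W : Type*} [MeasurableSpace Z] [MeasurableSpace W]
    (hdiag : MeasurableSet {p : W × W | p.1 = p.2})
    {F : Z → W} (hF : Measurable F)
    {Ω Ω' : Type*} [MeasurableSpace Ω] [MeasurableSpace Ω']
    (P : Measure Ω) (P' : Measure Ω') [IsProbabilityMeasure P] [IsProbabilityMeasure P']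
    {U : Ω → Z} {U' : Ω' → Z} {V : Ω' → W}
    (hU : Measurable U) (hU' : Measurable U') (hV : Measurable V)
    (hlaw : Measure.map (fun ω => (U ω, F (U ω))) P
          = Measure.map (fun ω' => (U' ω', V ω')) P') :
    ∀ᵐ ω' ∂P', V ω' = F (U' ω') := by
  set A : Set (Z × W) := {p | F p.1 = p.2} with hAdef
  have hA : MeasurableSet A := by
    have : A = (fun p : Z × W => (F p.1, p.2)) ⁻¹' {p : W × W | p.1 = p.2} := rfl
    rw [this]
    exact (hF.comp measurable_fst |>.prodMk measurable_snd) hdiag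
  have h1 : Measure.map (fun ω => (U ω, F (U ω))) P A = 1 := by
    rw [Measure.map_apply (show Measurable fun ω => (U ω, F (U ω)) from hU.prodMk (hF.comp hU)) hA]
    have : (fun ω => (U ω, F (U ω))) ⁻¹' A = Set.univ := by
      ext ω; simp [hAdef]
    rw [this]; simp
  have h2 : P' ((fun ω' => (U' ω', V ω')) ⁻¹' A) = 1 := by
    rw [← Measure.map_apply (hU'.prodMk hV) hA, ← hlaw, h1]
  have : ∀ᵐ ω' ∂P', ω' ∈ (fun ω' => (U' ω', V ω')) ⁻¹' A := by
    rw [ae_iff]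
    have := prob_compl_eq_zero_iff ((hU'.prodMk hV) hA) |>.mpr h2
    simpa [Set.compl_def] using this
  filter_upwards [this] with ω' hω'
  exact (hω' : F (U' ω') = V ω').symm
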